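/- Let d ≥ 1, N ≥ 1, let L_d : ℝ^d × ℝ^d → ℝ be continuously differentiable, and let q : {0, 1, …, N} → ℝ^d be a discrete path. Then the following are equivalent: (a) for every v : {0, 1, …, N} → ℝ^d with v₀ = 0 and v_N = 0, the derivative at ε = 0 of ε ↦ Σ_{k=0}^{N−1} L_d(q_k + ε·v_k, q_{k+1} + ε·v_{k+1}) equals 0 (the discrete Hamilton principle); (b) for every k with 1 ≤ k ≤ N−1, the discrete Euler–Lagrange equations hold: D₂L_d(q_{k−1}, q_k) + D₁L_d(q_k, q_{k+1}) = 0. -/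

import Mathlib

open scoped RealInnerProductSpace

section Helpers

variable {F : Type*} [NormedAddCommGroup F] [InnerProductSpace ℝ F] [CompleteSpace F]

lemma inner_grad_aux (f : F → ℝ) (x u : F) : ⟪gradient f x, u⟫ = fderiv ℝ f x u := by
  rw [gradient]; exact InnerProductSpace.toDual_symm_apply

omit [CompleteSpace F] in
lemma term_hasDerivAt_aux (Ld : F × F → ℝ) (hLd : ContDiff ℝ 1 Ld) (a b u w : F) :
    HasDerivAt (fun ε : ℝ => Ld (a + ε • u, b + ε • w))
      (fderiv ℝ Ld (a, b) (u, w)) 0 := by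
  have h1 : HasDerivAt (fun ε : ℝ => a + ε • u) u 0 := by
    simpa using (((hasDerivAt_id (0 : ℝ)).smul_const u).const_add a)
  have h2 : HasDerivAt (fun ε : ℝ => b + ε • w) w 0 := by
    simpa using (((hasDerivAt_id (0 : ℝ)).smul_const w).const_add b)
  have hp : HasDerivAt (fun ε : ℝ => (a + ε • u, b + ε • w)) (u, w) 0 := h1.prodMk h2
  have hf : HasFDerivAt Ld (fderiv ℝ Ld (a, b)) (a, b) :=
    (hLd.differentiable one_ne_zero (a, b)).hasFDerivAt
  exact (by simpa using hf :
    HasFDerivAt Ld (fderiv ℝ Ld (a, b)) (a + (0:ℝ) • u, b + (0:ℝ) • w)).comp_hasDerivAt 0 hp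

lemma fderiv_pair_eq_aux (Ld : F × F → ℝ) (hLd : ContDiff ℝ 1 Ld) (a b u w : F) :
    fderiv ℝ Ld (a, b) (u, w)
      = ⟪gradient (fun x => Ld (x, b)) a, u⟫ + ⟪gradient (fun y => Ld (a, y)) b, w⟫ := by
  have hf : HasFDerivAt Ld (fderiv ℝ Ld (a, b)) (a, b) :=
    (hLd.differentiable one_ne_zero (a, b)).hasFDerivAt
  have hx : HasFDerivAt (fun x : F => (x, b))
      ((ContinuousLinearMap.id ℝ F).prod (0 : F →L[ℝ] F)) a :=
    (hasFDerivAt_id a).prodMk (hasFDerivAt_const b a)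
  have hy : HasFDerivAt (fun y : F => (a, y))
      ((0 : F →L[ℝ] F).prod (ContinuousLinearMap.id ℝ F)) b :=
    (hasFDerivAt_const a b).prodMk (hasFDerivAt_id b)
  have g1 : fderiv ℝ (fun x => Ld (x, b)) a
      = (fderiv ℝ Ld (a, b)).comp ((ContinuousLinearMap.id ℝ F).prod 0) :=
    (hf.comp a hx).fderiv
  have g2 : fderiv ℝ (fun y => Ld (a, y)) b
      = (fderiv ℝ Ld (a, b)).comp ((0 : F →L[ℝ] F).prod (ContinuousLinearMap.id ℝ F)) :=
    (hf.comp b hy).fderiv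
  rw [inner_grad_aux, inner_grad_aux, g1, g2]
  have h : (u, w) = ((u, 0) : F × F) + (0, w) := by simp
  rw [h, map_add]
  simp

end Helpers

/-- **Discrete Hamilton's principle is equivalent to the discrete Euler–Lagrange equations.**
A discrete path `q : {0, …, N} → ℝ^d` is a stationary point of the discrete action
`𝓑_d(q) = Σ_{k=0}^{N−1} L_d(q_k, q_{k+1})` with respect to variations vanishing at the
endpoints if and only if the discrete Euler–Lagrange equations
`D₂L_d(q_{k−1}, q_k) + D₁L_d(q_k, q_{k+1}) = 0` hold for `1 ≤ k ≤ N−1`. -/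
theorem discrete_hamilton_principle_iff_discrete_euler_lagrange
    (d : ℕ) (hd : 1 ≤ d) (N : ℕ) (hN : 1 ≤ N)
    (Ld : EuclideanSpace ℝ (Fin d) × EuclideanSpace ℝ (Fin d) → ℝ)
    (hLd : ContDiff ℝ 1 Ld)
    (q : ℕ → EuclideanSpace ℝ (Fin d)) :
    (∀ v : ℕ → EuclideanSpace ℝ (Fin d), v 0 = 0 → v N = 0 →
      deriv (fun ε : ℝ =>
        ∑ k ∈ Finset.range N, Ld (q k + ε • v k, q (k + 1) + ε • v (k + 1))) 0 = 0)
    ↔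
    (∀ k : ℕ, 1 ≤ k → k + 1 ≤ N →
      gradient (fun y => Ld (q (k - 1), y)) (q k)
        + gradient (fun x => Ld (x, q (k + 1))) (q k) = 0) := by
  set g1 : ℕ → EuclideanSpace ℝ (Fin d) :=
    fun k => gradient (fun x => Ld (x, q (k + 1))) (q k) with hg1
  set g2 : ℕ → EuclideanSpace ℝ (Fin d) :=
    fun k => gradient (fun y => Ld (q k, y)) (q (k + 1)) with hg2
  have key : ∀ v : ℕ → EuclideanSpace ℝ (Fin d), v 0 = 0 → v N = 0 →
      deriv (fun ε : ℝ =>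
        ∑ k ∈ Finset.range N, Ld (q k + ε • v k, q (k + 1) + ε • v (k + 1))) 0
      = ∑ i ∈ Finset.range N, ⟪g2 (i - 1) + g1 i, v i⟫ := by
    intro v hv0 hvN
    have hD : HasDerivAt (fun ε : ℝ =>
        ∑ k ∈ Finset.range N, Ld (q k + ε • v k, q (k + 1) + ε • v (k + 1)))
        (∑ k ∈ Finset.range N, fderiv ℝ Ld (q k, q (k + 1)) (v k, v (k + 1))) 0 :=
      HasDerivAt.fun_sum (fun k _ => term_hasDerivAt_aux Ld hLd _ _ _ _)
    rw [hD.deriv]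
    have hterm : ∀ k, fderiv ℝ Ld (q k, q (k + 1)) (v k, v (k + 1))
        = ⟪g1 k, v k⟫ + ⟪g2 k, v (k + 1)⟫ := fun k =>
      fderiv_pair_eq_aux Ld hLd _ _ _ _
    simp_rw [hterm]
    rw [Finset.sum_add_distrib]
    have hswap : ∑ k ∈ Finset.range N, ⟪g2 k, v (k + 1)⟫
        = ∑ i ∈ Finset.range N, ⟪g2 (i - 1), v i⟫ := by
      have h1 := Finset.sum_range_succ' (fun i => ⟪g2 (i - 1), v i⟫) N
      rw [Finset.sum_range_succ] at h1
      simp only [hv0, hvN, inner_zero_right, add_zero, Nat.add_sub_cancel] at h1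
      exact h1.symm
    rw [hswap, ← Finset.sum_add_distrib]
    exact Finset.sum_congr rfl fun i _ => by rw [inner_add_left, add_comm]
  constructor
  · intro h k hk hkN
    set w : EuclideanSpace ℝ (Fin d) :=
      gradient (fun y => Ld (q (k - 1), y)) (q k)
        + gradient (fun x => Ld (x, q (k + 1))) (q k) with hw
    set v : ℕ → EuclideanSpace ℝ (Fin d) := fun i => if i = k then w else 0 with hv
    have hv0 : v 0 = 0 := if_neg (by omega)
    have hvN : v N = 0 := if_neg (by omega)
    have h0 := h v hv0 hvN
    rw [key v hv0 hvN] at h0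
    have hsum : ∑ i ∈ Finset.range N, ⟪g2 (i - 1) + g1 i, v i⟫
        = ⟪g2 (k - 1) + g1 k, w⟫ := by
      rw [Finset.sum_eq_single k]
      · simp [hv]
      · intro i _ hik; simp [hv, hik]
      · intro hkmemn; exact absurd (Finset.mem_range.mpr (by omega)) hkmemn
    rw [hsum] at h0
    have hk1 : k - 1 + 1 = k := by omega
    have hgw : g2 (k - 1) + g1 k = w := by
      rw [hg2, hg1, hw]; simp only [hk1]
    rw [hgw, real_inner_self_eq_norm_sq] at h0
    have : w = 0 := by
      have := sq_eq_zero_iff.mp h0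
      simpa using this
    exact this
  · intro h v hv0 hvN
    rw [key v hv0 hvN]
    apply Finset.sum_eq_zero
    intro i hi
    rcases Nat.eq_zero_or_pos i with h0 | hpos
    · subst h0; rw [hv0, inner_zero_right]
    · have hi1 : i - 1 + 1 = i := by omega
      have hz : g2 (i - 1) + g1 i = 0 := by
        have := h i hpos (Finset.mem_range.mp hi)
        rw [hg2, hg1]; simp only [hi1]; exact this
      rw [hz, inner_zero_left]
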